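/- Fix κ ≥ 1 and consider, for each h ∈ [1/κ, 1], the quadratic λ² + 2dλ + h = 0 with damping parameter d > 0. Define the worst-case decay rate r(d) := max over h ∈ [1/κ,1] of the largest real part of the two roots. Then r(d) is minimized at d = 1/√κ, with minimal value r(1/√κ) = −1/√κ. -/
import Mathlib

/-- Key algebraic fact: if z² + 2dz + h = 0 then, with u = Re z + d, v = Im z,
we have u² − v² = d² − h and u·v = 0. -/
lemma stmt_4_key (d h : ℝ) (z : ℂ) (hz : z ^ 2 + 2 * d * z + h = 0) :
    (z.re + d) ^ 2 - z.im ^ 2 = d ^ 2 - h ∧ (z.re + d) * z.im = 0 := by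
  have h1 : (z + d) ^ 2 = ((d ^ 2 - h : ℝ) : ℂ) := by
    push_cast
    linear_combination hz
  have hre := congrArg Complex.re h1
  have him := congrArg Complex.im h1
  simp [pow_two, Complex.mul_re, Complex.mul_im, Complex.add_re, Complex.add_im] at hre him
  constructor
  · nlinarith [hre]
  · nlinarith [him]

set_option maxHeartbeats 1000000 in
/-- Optimal damping for the continuous-time heavy-ball method: with
`r d = sup { Re λ : λ² + 2dλ + h = 0, h ∈ [1/κ, 1] }` the worst-case decay rate,
`r` is minimized over `d > 0` at `d = 1/√κ`, with minimal value `−1/√κ`. -/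
theorem stmt_4 (κ : ℝ) (hκ : 1 ≤ κ) (r : ℝ → ℝ)
    (hr : ∀ d : ℝ, r d = sSup {x : ℝ | ∃ (z : ℂ) (h : ℝ),
      1 / κ ≤ h ∧ h ≤ 1 ∧ z ^ 2 + 2 * d * z + h = 0 ∧ x = z.re}) :
    r (1 / Real.sqrt κ) = -(1 / Real.sqrt κ) ∧
      ∀ d : ℝ, 0 < d → r (1 / Real.sqrt κ) ≤ r d := by
  have hκ0 : (0 : ℝ) < κ := lt_of_lt_of_le one_pos hκ
  set s : ℝ := 1 / Real.sqrt κ with hsdef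
  have hsqpos : 0 < Real.sqrt κ := Real.sqrt_pos.2 hκ0
  have hsq1 : (1 : ℝ) ≤ Real.sqrt κ := by
    rw [show (1 : ℝ) = Real.sqrt 1 by simp]
    exact Real.sqrt_le_sqrt hκ
  have hs0 : 0 < s := by positivity
  have hs2 : s ^ 2 = 1 / κ := by
    rw [hsdef, div_pow, one_pow, Real.sq_sqrt hκ0.le]
  have hκ1 : 1 / κ ≤ 1 := by
    rw [div_le_one hκ0]; exact hκ
  have hκinv : 0 < 1 / κ := by positivity
  -- boundedness of the set for any d > 0
  have hbdd : ∀ d : ℝ, 0 < d → BddAbove {x : ℝ | ∃ (z : ℂ) (h : ℝ),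
      1 / κ ≤ h ∧ h ≤ 1 ∧ z ^ 2 + 2 * d * z + h = 0 ∧ x = z.re} := by
    intro d hd
    refine ⟨0, ?_⟩
    rintro x ⟨z, h, hh1, hh2, hz, rfl⟩
    obtain ⟨k1, k2⟩ := stmt_4_key d h z hz
    rcases mul_eq_zero.1 k2 with hu | hv
    · nlinarith
    · rw [hv] at k1
      nlinarith
  -- element ≥ -s in the set for any d > 0
  have hmem : ∀ d : ℝ, 0 < d → ∃ x ∈ {x : ℝ | ∃ (z : ℂ) (h : ℝ),
      1 / κ ≤ h ∧ h ≤ 1 ∧ z ^ 2 + 2 * d * z + h = 0 ∧ x = z.re}, -s ≤ x := by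
    intro d hd
    by_cases hds : d ≤ s
    · refine ⟨-d, ⟨⟨-d, Real.sqrt (s ^ 2 - d ^ 2)⟩, 1 / κ, le_refl _, hκ1, ?_, rfl⟩, by linarith⟩
      have hnn : 0 ≤ s ^ 2 - d ^ 2 := by nlinarith
      have hsq : Real.sqrt (s ^ 2 - d ^ 2) ^ 2 = s ^ 2 - d ^ 2 := Real.sq_sqrt hnn
      have hsq' : Real.sqrt (s * s - d * d) * Real.sqrt (s * s - d * d) = s * s - d * d :=
        Real.mul_self_sqrt (by nlinarith)
      rw [← hs2]
      apply Complex.ext <;>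
        simp [pow_two, Complex.mul_re, Complex.mul_im] <;> nlinarith [hsq']
    · push_neg at hds
      set t : ℝ := Real.sqrt (d ^ 2 - s ^ 2) with htdef
      have hnn : 0 ≤ d ^ 2 - s ^ 2 := by nlinarith
      have hsq : t ^ 2 = d ^ 2 - s ^ 2 := Real.sq_sqrt hnn
      have ht0 : 0 ≤ t := Real.sqrt_nonneg _
      refine ⟨-d + t, ⟨((-d + t : ℝ) : ℂ), 1 / κ, le_refl _, hκ1, ?_, by simp⟩, ?_⟩
      · rw [← hs2]
        push_cast
        have : ((-(d:ℂ) + t) ^ 2 + 2 * d * (-d + t) + s ^ 2 : ℂ)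
            = ((t ^ 2 - (d ^ 2 - s ^ 2) : ℝ) : ℂ) := by push_cast; ring
        rw [this, hsq]
        simp
      · nlinarith
  constructor
  · rw [hr s]
    apply le_antisymm
    · apply csSup_le
      · obtain ⟨x, hx, _⟩ := hmem s hs0
        exact ⟨x, hx⟩
      · rintro x ⟨z, h, hh1, hh2, hz, rfl⟩
        obtain ⟨k1, k2⟩ := stmt_4_key s h z hz
        have hu : z.re + s = 0 := by
          rcases mul_eq_zero.1 k2 with hu | hv
          · exact hu
          · rw [hv] at k1
            nlinarith [hs2, hh1]
        linarith
    · apply le_csSup (hbdd s hs0)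
      refine ⟨((-s : ℝ) : ℂ), 1 / κ, le_refl _, hκ1, ?_, by simp⟩
      rw [← hs2]
      push_cast
      ring
  · intro d hd
    rw [hr s, hr d]
    obtain ⟨x, hx, hxs⟩ := hmem d hd
    have h2 : sSup {x : ℝ | ∃ (z : ℂ) (h : ℝ),
        1 / κ ≤ h ∧ h ≤ 1 ∧ z ^ 2 + 2 * s * z + h = 0 ∧ x = z.re} ≤ -s := by
      apply csSup_le
      · obtain ⟨y, hy, _⟩ := hmem s hs0
        exact ⟨y, hy⟩
      · rintro y ⟨z, h, hh1, hh2, hz, rfl⟩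
        obtain ⟨k1, k2⟩ := stmt_4_key s h z hz
        have hu : z.re + s = 0 := by
          rcases mul_eq_zero.1 k2 with hu | hv
          · exact hu
          · rw [hv] at k1
            nlinarith [hs2, hh1]
        linarith
    have h3 := le_csSup (hbdd d hd) hx
    linarith
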